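/- Every μ-obstruction of type I either contains a K_μ subgraph or, for every positive integer k, contains an induced K_{k,ω}. -/

import Mathlib

open Cardinal

universe u v

/-- A well-ordering of the vertices of `G` in which every vertex has
fewer than `μ` neighbours preceding it (a *good* well-ordering for `μ`). -/
def HasGoodOrder {V : Type u} (G : SimpleGraph V) (μ : Cardinal.{u}) : Prop :=
  ∃ r : V → V → Prop, IsWellOrder V r ∧ ∀ v : V, #{w : V | G.Adj v w ∧ r w v} < μ

/-- The colouring number of `G`: the least cardinal `κ` admitting a
well-ordering of the vertices in which each vertex has fewer than `κ`
earlier neighbours. -/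
noncomputable def col {V : Type u} (G : SimpleGraph V) : Cardinal.{u} :=
  sInf {μ : Cardinal.{u} | HasGoodOrder G μ}

/-- `X` is robust (for `μ`): every vertex outside `X` has fewer than `μ`
neighbours inside `X`. -/
def Robust {V : Type u} (G : SimpleGraph V) (μ : Cardinal.{u}) (X : Set V) : Prop :=
  ∀ v ∉ X, #(G.neighborSet v ∩ X : Set V) < μ

/-- `G` contains a `μ`-barricade as a subgraph: disjoint vertex sets `A`, `B`
with `|A| < |B|` such that every vertex of `B` has at least `μ` neighbours in `A`. -/
def HasBarricade {V : Type u} (G : SimpleGraph V) (μ : Cardinal.{u}) : Prop :=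
  ∃ A B : Set V, Disjoint A B ∧ #A < #B ∧
    ∀ b ∈ B, μ ≤ #(G.neighborSet b ∩ A : Set V)

/-- `G` contains a `μ`-obstruction of type I as a subgraph: disjoint sets `A`, `B`
with `|A| = λ ≥ μ`, `|B| = λ⁺`, every vertex of `B` having at least `μ`
neighbours in `A` and every vertex of `A` having `λ⁺` neighbours in `B`. -/
def HasTypeIObstruction {V : Type u} (G : SimpleGraph V) (μ : Cardinal.{u}) : Prop :=
  ∃ (A B : Set V) (lam : Cardinal.{u}), Disjoint A B ∧ μ ≤ lam ∧
    #A = lam ∧ #B = Order.succ lam ∧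
    (∀ b ∈ B, μ ≤ #(G.neighborSet b ∩ A : Set V)) ∧
    (∀ a ∈ A, #(G.neighborSet a ∩ B : Set V) = Order.succ lam)

/-- `G` itself is a `μ`-obstruction of type I: a bipartite graph with
bipartition `(A, B)` satisfying the type I conditions. -/
def IsTypeIObstruction {V : Type u} (G : SimpleGraph V) (μ : Cardinal.{u}) : Prop :=
  ∃ (A B : Set V) (lam : Cardinal.{u}), Disjoint A B ∧ A ∪ B = Set.univ ∧
    (∀ a b, G.Adj a b → (a ∈ A ∧ b ∈ B) ∨ (a ∈ B ∧ b ∈ A)) ∧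
    μ ≤ lam ∧ #A = lam ∧ #B = Order.succ lam ∧
    (∀ b ∈ B, μ ≤ #(G.neighborSet b ∩ A : Set V)) ∧
    (∀ a ∈ A, #(G.neighborSet a ∩ B : Set V) = Order.succ lam)

/-- `C` is closed and unbounded in the ordinal `o`. -/
def IsClubIn (C : Set Ordinal.{v}) (o : Ordinal.{v}) : Prop :=
  (∀ a < o, ∃ b ∈ C, a ≤ b ∧ b < o) ∧
  (∀ a < o, a ≠ 0 → sSup (C ∩ Set.Iio a) = a → a ∈ C)

/-- `S` is stationary in the ordinal `o`: it meets every club subset of `o`. -/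
def IsStationaryIn (S : Set Ordinal.{v}) (o : Ordinal.{v}) : Prop :=
  ∀ C : Set Ordinal.{v}, IsClubIn C o → (S ∩ C ∩ Set.Iio o).Nonempty

/-- The set `T_H` of vertices `α` (ordinals) with `cf α = cf μ`, whose set of
neighbours below `α` has order type `μ` and supremum `α`. -/
noncomputable def typeIITarget (H : SimpleGraph Ordinal.{v}) (μ : Cardinal.{v}) :
    Set Ordinal.{v} :=
  {α | α.cof = μ.ord.cof ∧
    Ordinal.type (Subrel ((· < ·) : Ordinal.{v} → Ordinal.{v} → Prop)
      (· ∈ H.neighborSet α ∩ Set.Iio α)) = Ordinal.lift.{v + 1} μ.ord ∧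
    sSup (H.neighborSet α ∩ Set.Iio α) = α}

/-- `H` is a `μ`-obstruction of type II with vertex set the regular cardinal
`κ > μ` (realised as the ordinals below `κ`): `T_H` is stationary in `κ`. -/
def IsTypeIIObstruction (H : SimpleGraph Ordinal.{v}) (μ κ : Cardinal.{v}) : Prop :=
  μ < κ ∧ κ.IsRegular ∧ (∀ a b, H.Adj a b → a < κ.ord ∧ b < κ.ord) ∧
  IsStationaryIn (typeIITarget H μ) κ.ord

/-- `G` contains a `μ`-obstruction of type II as a subgraph. -/
def HasTypeIIObstruction {V : Type u} (G : SimpleGraph V) (μ : Cardinal.{v}) : Prop :=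
  ∃ (κ : Cardinal.{v}) (H : SimpleGraph Ordinal.{v}) (f : Ordinal.{v} → V),
    Set.InjOn f (Set.Iio κ.ord) ∧ (∀ a b, H.Adj a b → G.Adj (f a) (f b)) ∧
    IsTypeIIObstruction H μ κ

/-- `G` contains a complete subgraph on `μ` vertices. -/
def HasCompleteSubgraph {V : Type u} (G : SimpleGraph V) (μ : Cardinal.{u}) : Prop :=
  ∃ S : Set V, #S = μ ∧ S.Pairwise G.Adj

/-- `G` contains an induced copy of the complete bipartite graph `K_{k,ω}`. -/
def HasInducedKkOmega {V : Type u} (G : SimpleGraph V) (k : ℕ) : Prop :=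
  ∃ A B : Set V, Disjoint A B ∧ #A = (k : Cardinal.{u}) ∧ #B = ℵ₀ ∧
    (∀ a ∈ A, ∀ b ∈ B, G.Adj a b) ∧
    (∀ a ∈ A, ∀ a' ∈ A, a ≠ a' → ¬ G.Adj a a') ∧
    (∀ b ∈ B, ∀ b' ∈ B, b ≠ b' → ¬ G.Adj b b')

/-- every `μ`-obstruction of type I contains a `K_μ` subgraph or,
for every positive `k`, an induced `K_{k,ω}`. -/
theorem stmt14 {V : Type u} (G : SimpleGraph V) (μ : Cardinal.{u}) (hμ : ℵ₀ ≤ μ)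
    (h : IsTypeIObstruction G μ) :
    HasCompleteSubgraph G μ ∨ ∀ k : ℕ, 0 < k → HasInducedKkOmega G k := by
  obtain ⟨A, B, lam, hdis, hun, hbip, hμlam, hA, hB, hBnbr, hAnbr⟩ := h
  right
  intro k _
  -- A and B are infinite
  have hℵA : ℵ₀ ≤ #A := by rw [hA]; exact hμ.trans hμlam
  haveI instA : Infinite A := Cardinal.infinite_iff.mpr hℵA
  -- the set of neighbours of each b ∈ B inside A, viewed in the subtype A, is infinite
  have himg : ∀ b : B, Subtype.val '' {a : A | G.Adj ↑b ↑a} = G.neighborSet ↑b ∩ A := by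
    intro b
    ext x
    constructor
    · rintro ⟨⟨a, ha⟩, hadj, rfl⟩
      exact ⟨hadj, ha⟩
    · rintro ⟨hadj, hx⟩
      exact ⟨⟨x, hx⟩, hadj, rfl⟩
  have hinf : ∀ b : B, {a : A | G.Adj ↑b ↑a}.Infinite := by
    intro b
    rw [← Set.infinite_coe_iff, Cardinal.infinite_iff]
    have hcard : #({a : A | G.Adj ↑b ↑a}) = #(G.neighborSet ↑b ∩ A : Set V) := by
      rw [← himg b, Cardinal.mk_image_eq Subtype.val_injective]
    rw [hcard]
    exact hμ.trans (hBnbr ↑b b.2)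
  -- choose for each b ∈ B a set of k neighbours in A
  choose f hf1 hf2 using fun b : B => (hinf b).exists_subset_card_eq k
  -- pigeonhole: some value of f has infinite fiber
  have hlt : #(Finset A) < #B := by
    rw [Cardinal.mk_finset_of_infinite, hA, hB]
    exact Order.lt_succ lam
  obtain ⟨s, hs⟩ := (haveI : Infinite B := Cardinal.infinite_iff.mpr ((hℵA.trans (by rw [Cardinal.mk_finset_of_infinite])).trans hlt.le); Cardinal.exists_infinite_fiber f hlt)
  -- the fiber pushed into V
  have hBsetInf : (Subtype.val '' (f ⁻¹' {s}) : Set V).Infinite := by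
    have : (f ⁻¹' {s}).Infinite := Set.infinite_coe_iff.mp hs
    exact this.image (Set.injOn_of_injective Subtype.val_injective)
  obtain ⟨Bs, hBsub, hBscard⟩ :=
    Cardinal.le_mk_iff_exists_subset.mp (Cardinal.infinite_iff.mp hBsetInf.to_subtype)
  -- the common neighbourhood pushed into V
  set As : Set V := Subtype.val '' (↑s : Set A) with hAs
  have hAsubA : As ⊆ A := by
    rintro x ⟨a, _, rfl⟩
    exact a.2
  have hBsubB : Bs ⊆ B := by
    intro x hx
    obtain ⟨b, _, rfl⟩ := hBsub hx
    exact b.2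
  -- every element of Bs is adjacent to every element of As
  have hadjall : ∀ b ∈ Bs, ∀ a ∈ As, G.Adj ↑b ↑a := by
    intro b hb a ha
    obtain ⟨b', hb', rfl⟩ := hBsub hb
    obtain ⟨a', ha', rfl⟩ := ha
    have hfb : f b' = s := hb'
    have := hf1 b' (by rw [hfb]; exact ha')
    exact this
  -- s has cardinality k
  have hsk : s.card = k := by
    obtain ⟨x, hx⟩ := hBsetInf.nonempty
    obtain ⟨b', hb', rfl⟩ := hx
    have hfb : f b' = s := hb'
    rw [← hfb]; exact hf2 b'
  refine ⟨As, Bs, Set.disjoint_of_subset hAsubA hBsubB hdis, ?_, hBscard, ?_, ?_, ?_⟩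
  · rw [hAs, Cardinal.mk_image_eq Subtype.val_injective]
    simp [hsk]
  · intro a ha b hb
    exact (hadjall b hb a ha).symm
  · intro a ha a' ha' _ hadj
    rcases hbip a a' hadj with ⟨h1, h2⟩ | ⟨h1, h2⟩
    · exact hdis.ne_of_mem (hAsubA ha') h2 rfl
    · exact hdis.ne_of_mem (hAsubA ha) h1 rfl
  · intro b hb b' hb' _ hadj
    rcases hbip b b' hadj with ⟨h1, h2⟩ | ⟨h1, h2⟩
    · exact hdis.ne_of_mem h1 (hBsubB hb) rfl
    · exact hdis.ne_of_mem h2 (hBsubB hb') rfl
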